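/- For every integer n ≥ 2, there exists a polynomial p ∈ ℤ[x] such that pᵏ has a negative coefficient for all 1 ≤ k < n, pⁿ has all coefficients nonnegative, and (1+x)·p(x) has all coefficients nonnegative. Explicitly, p(x) = a₀ + a₁x − x² + a₀x³ + a₀x⁴ with a₁ = 5ⁿ and a₀ = ⌊(n−1)/2 · 5^{2n}⌋ works. -/

import Mathlib

open Polynomial Finset

namespace NegAux

noncomputable def Pa (a b : ℤ) : Polynomial ℤ := C a + C b * X + C a * X^3 + C a * X^4

noncomputable def cc (a b : ℤ) (M d : ℕ) : ℤ := ((Pa a b)^M).coeff d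

variable {a b : ℤ}

lemma Pa_mul_coeff (q : Polynomial ℤ) (d : ℕ) :
    (Pa a b * q).coeff d = a * q.coeff d + b * (if 1 ≤ d then q.coeff (d-1) else 0)
      + a * (if 3 ≤ d then q.coeff (d-3) else 0) + a * (if 4 ≤ d then q.coeff (d-4) else 0) := by
  have h : Pa a b * q = C a * q + C b * (q * X^1) + C a * (q * X^3) + C a * (q * X^4) := by
    unfold Pa; ring
  rw [h]
  simp only [coeff_add, coeff_C_mul, coeff_mul_X_pow', mul_ite, mul_zero]

lemma cc_succ (M : ℕ) (d : ℕ) :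
    cc a b (M+1) d = a * cc a b M d + b * (if 1 ≤ d then cc a b M (d-1) else 0)
      + a * (if 3 ≤ d then cc a b M (d-3) else 0) + a * (if 4 ≤ d then cc a b M (d-4) else 0) := by
  have h : (Pa a b)^(M+1) = Pa a b * (Pa a b)^M := by ring
  unfold cc
  rw [h, Pa_mul_coeff]

lemma cc_zero (d : ℕ) : cc a b 0 d = if d = 0 then 1 else 0 := by
  unfold cc
  simp [Polynomial.coeff_one]

lemma cc_nonneg (ha : 0 ≤ a) (hb : 0 ≤ b) (M d : ℕ) : 0 ≤ cc a b M d := by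
  induction M generalizing d with
  | zero => rw [cc_zero]; split <;> norm_num
  | succ M ih =>
    rw [cc_succ]
    have g : ∀ (c : Prop) [Decidable c] (e : ℕ), 0 ≤ (if c then cc a b M e else 0) := by
      intro c _ e; split
      · exact ih e
      · exact le_rfl
    have g1 := g (1 ≤ d) (d-1)
    have g3 := g (3 ≤ d) (d-3)
    have g4 := g (4 ≤ d) (d-4)
    have := ih d
    positivity

end NegAux
namespace NegAux
variable {a b : ℤ}

lemma ccR0 (M : ℕ) : cc a b (M+1) 0 = a * cc a b M 0 := by
  rw [cc_succ]; norm_num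

lemma ccR1 (M : ℕ) : cc a b (M+1) 1 = a * cc a b M 1 + b * cc a b M 0 := by
  rw [cc_succ]; norm_num

lemma ccR2 (M : ℕ) : cc a b (M+1) 2 = a * cc a b M 2 + b * cc a b M 1 := by
  rw [cc_succ]; norm_num

lemma ccR3 (M : ℕ) : cc a b (M+1) 3 = a * cc a b M 3 + b * cc a b M 2 + a * cc a b M 0 := by
  rw [cc_succ]; norm_num

lemma ccR4 (M d : ℕ) : cc a b (M+1) (d+4) = a * cc a b M (d+4) + b * cc a b M (d+3)
    + a * cc a b M (d+1) + a * cc a b M d := by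
  rw [cc_succ, if_pos (by omega : 1 ≤ d+4), if_pos (by omega : 3 ≤ d+4),
    if_pos (by omega : 4 ≤ d+4)]
  rfl

lemma ccF0 (M : ℕ) : cc a b M 0 = a ^ M := by
  induction M with
  | zero => rw [cc_zero]; norm_num
  | succ M ih => rw [ccR0, ih]; ring

lemma ccF1 (M : ℕ) : cc a b (M+1) 1 = (M+1 : ℤ) * b * a ^ M := by
  induction M with
  | zero => rw [ccR1, cc_zero, cc_zero]; norm_num
  | succ M ih => rw [ccR1, ih, ccF0]; push_cast; ring

lemma ccF2 (M : ℕ) : 2 * cc a b (M+2) 2 = (M+2 : ℤ) * (M+1 : ℤ) * b^2 * a ^ M := by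
  induction M with
  | zero =>
    rw [ccR2, ccR2, ccF1, cc_zero, cc_zero]
    norm_num; ring
  | succ M ih =>
    have : (2:ℤ) * cc a b (M+3) 2 = a * (2 * cc a b (M+2) 2) + 2 * b * cc a b (M+2) 1 := by
      rw [ccR2]; ring
    rw [this, ih, ccF1]; push_cast; ring

lemma cc_one_0 : cc a b 1 0 = a := by rw [ccF0]; ring
lemma cc_one_1 : cc a b 1 1 = b := by rw [ccF1]; push_cast; ring
lemma cc_one_2 : cc a b 1 2 = 0 := by
  rw [ccR2, cc_zero, cc_zero]; norm_num
lemma cc_one_3 : cc a b 1 3 = a := by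
  rw [ccR3, cc_zero, cc_zero, cc_zero]; norm_num
lemma cc_one_4 : cc a b 1 4 = a := by
  rw [show (4:ℕ) = 0+4 from rfl, ccR4, cc_zero, cc_zero, cc_zero, cc_zero]; norm_num
lemma cc_one_ge5 (d : ℕ) : cc a b 1 (d+5) = 0 := by
  rw [show d+5 = (d+1)+4 from rfl, ccR4, cc_zero, cc_zero, cc_zero, cc_zero]
  norm_num

lemma ccAUX3 (ha : 0 ≤ a) (hb : 0 ≤ b) (M : ℕ) : a^(M+1) ≤ cc a b (M+1) 3 := by
  induction M with
  | zero => rw [cc_one_3]; ring_nf; exact le_refl a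
  | succ M ih =>
    rw [ccR3]
    have h2 := cc_nonneg ha hb M.succ 2
    have h0 := cc_nonneg ha hb M.succ 0
    have h1 := mul_le_mul_of_nonneg_left ih ha
    have h3 := mul_nonneg hb h2
    have h4 := mul_nonneg ha h0
    calc a^(M+1+1) = a * a^(M+1) := by ring
    _ ≤ a * cc a b (M+1) 3 + (b * cc a b (M+1) 2 + a * cc a b (M+1) 0) := by linarith
    _ = a * cc a b (M+1) 3 + b * cc a b (M+1) 2 + a * cc a b (M+1) 0 := by ring

end NegAux
namespace NegAux
variable {a b : ℤ} {n : ℕ}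

/-- n * c_M(1) ≤ a * c_M(0) for M ≤ b -/
lemma ccAUXB (ha : 0 ≤ a) (hb : 0 ≤ b) (hn : (n:ℤ) ≤ b) (hba : b^3 ≤ a^2)
    (M : ℕ) (hM : (M:ℤ) ≤ b) : (n:ℤ) * cc a b M 1 ≤ a * cc a b M 0 := by
  cases M with
  | zero =>
    rw [cc_zero, cc_zero]; norm_num
    positivity
  | succ e =>
    rw [ccF1, ccF0]
    have hb1 : ((e:ℤ)+1) ≤ b := by push_cast at hM ⊢; linarith
    have key : (n:ℤ) * ((e:ℤ)+1) * b ≤ a^2 := by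
      calc (n:ℤ) * ((e:ℤ)+1) * b ≤ b * b * b := by
            apply mul_le_mul _ le_rfl hb (by positivity)
            exact mul_le_mul hn hb1 (by positivity) hb
      _ = b^3 := by ring
      _ ≤ a^2 := hba
    have hp : (0:ℤ) ≤ a ^ e := pow_nonneg ha e
    have h2 := mul_le_mul_of_nonneg_right key hp
    have hps : a^(e+1) = a^e * a := pow_succ a e
    rw [hps]
    push_cast
    nlinarith [h2]

/-- n * c_M(2) ≤ a * c_M(1) for M ≤ b -/
lemma ccAUXA (ha : 0 ≤ a) (hb : 0 ≤ b) (hn : (n:ℤ) ≤ b) (hba : b^3 ≤ a^2)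
    (M : ℕ) (hM : (M:ℤ) ≤ b) : (n:ℤ) * cc a b M 2 ≤ a * cc a b M 1 := by
  match M with
  | 0 =>
    rw [cc_zero]; norm_num
    exact mul_nonneg ha (cc_nonneg ha hb 0 1)
  | 1 =>
    rw [cc_one_2]; norm_num
    exact mul_nonneg ha (cc_nonneg ha hb 1 1)
  | (e+2) =>
    rw [← mul_le_mul_iff_right₀ (show (0:ℤ) < 2 by norm_num)]
    have hF2 := ccF2 (a := a) (b := b) e
    have hb1 : ((e:ℤ)+1) ≤ b := by push_cast at hM ⊢; linarith
    have key : (n:ℤ) * ((e:ℤ)+1) * b ≤ a^2 := by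
      calc (n:ℤ) * ((e:ℤ)+1) * b ≤ b * b * b := by
            apply mul_le_mul _ le_rfl hb (by positivity)
            exact mul_le_mul hn hb1 (by positivity) hb
      _ = b^3 := by ring
      _ ≤ a^2 := hba
    have hp : (0:ℤ) ≤ ((e:ℤ)+2) * b * a^e := by positivity
    have h2 := mul_le_mul_of_nonneg_right key hp
    have hps : a^(e+1) = a^e * a := pow_succ a e
    calc (2:ℤ) * ((n:ℤ) * cc a b (e+2) 2) = (n:ℤ) * (2 * cc a b (e+2) 2) := by ring
    _ = (n:ℤ) * ((e+2:ℤ) * (e+1:ℤ) * b^2 * a^e) := by rw [hF2]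
    _ ≤ 2 * (a * cc a b (e+2) 1) := by
        rw [ccF1, hps]
        push_cast
        nlinarith [h2]

/-- n * c_{M+1}(0) ≤ a * c_{M+1}(3) -/
lemma ccAUXC (ha : 0 ≤ a) (hb : 0 ≤ b) (han : (n:ℤ) ≤ a)
    (M : ℕ) : (n:ℤ) * cc a b (M+1) 0 ≤ a * cc a b (M+1) 3 := by
  have h3 := ccAUX3 ha hb M
  have h0 : cc a b (M+1) 0 = a^(M+1) := ccF0 _
  have hp : (0:ℤ) ≤ a^(M+1) := pow_nonneg ha _
  calc (n:ℤ) * cc a b (M+1) 0 = (n:ℤ) * a^(M+1) := by rw [h0]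
  _ ≤ a * a^(M+1) := mul_le_mul_of_nonneg_right han hp
  _ ≤ a * cc a b (M+1) 3 := mul_le_mul_of_nonneg_left h3 ha

end NegAux
namespace NegAux
variable {a b : ℤ} {n : ℕ}

lemma ccSA (ha : 0 ≤ a) (hb : 0 ≤ b) (hn : (n:ℤ) ≤ b) (hba : b^3 ≤ a^2)
    (M : ℕ) (hM : (M:ℤ) ≤ b) : (n:ℤ) * cc a b M 2 ≤ cc a b (M+1) 4 := by
  have h := ccAUXA ha hb hn hba M hM
  rw [show (4:ℕ) = 0+4 from rfl, ccR4]
  have h4 := mul_nonneg ha (cc_nonneg ha hb M 4)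
  have h3 := mul_nonneg hb (cc_nonneg ha hb M 3)
  have h0 := mul_nonneg ha (cc_nonneg ha hb M 0)
  norm_num
  linarith

lemma ccSB (ha : 0 ≤ a) (hb : 0 ≤ b) (hn : (n:ℤ) ≤ b) (hba : b^3 ≤ a^2)
    (M : ℕ) (hM : (M:ℤ) ≤ b) : (n:ℤ) * cc a b M 1 ≤ cc a b (M+1) 3 := by
  have h := ccAUXB ha hb hn hba M hM
  rw [ccR3]
  have h3 := mul_nonneg ha (cc_nonneg ha hb M 3)
  have h2 := mul_nonneg hb (cc_nonneg ha hb M 2)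
  linarith

lemma ccSC (ha : 0 ≤ a) (hb : 0 ≤ b) (hn : (n:ℤ) ≤ b)
    (M : ℕ) : (n:ℤ) * cc a b M 0 ≤ cc a b (M+1) 1 := by
  rw [ccR1]
  have h1 := mul_nonneg ha (cc_nonneg ha hb M 1)
  have h0 := mul_le_mul_of_nonneg_right hn (cc_nonneg ha hb M 0)
  linarith

lemma ccSD (ha : 0 ≤ a) (hb : 0 ≤ b) (hn : (n:ℤ) ≤ b) (hba : b^3 ≤ a^2) (han : (n:ℤ) ≤ a)
    (K : ℕ) (hM : ((K+1:ℕ):ℤ) ≤ b) :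
    (n:ℤ) * cc a b (K+1) 1 + (n:ℤ) * cc a b (K+1) 0 ≤ cc a b (K+2) 3 := by
  have h1 := ccAUXB ha hb hn hba (K+1) hM
  have h0 := ccAUXC (n := n) ha hb han K
  have := ccR3 (a := a) (b := b) (K+1)
  rw [show K+2 = (K+1)+1 from rfl, ccR3]
  have h2 := mul_nonneg hb (cc_nonneg ha hb (K+1) 2)
  linarith

/-- The central claim: n * c_M(d+3) ≤ c_{M+1}(d+5) for M ≤ n. -/
lemma ccClaim (ha : 0 ≤ a) (hb : 0 ≤ b) (hn : (n:ℤ) ≤ b) (hba : b^3 ≤ a^2) (han : (n:ℤ) ≤ a)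
    (M : ℕ) (hMn : M ≤ n) : ∀ d : ℕ, (n:ℤ) * cc a b M (d+3) ≤ cc a b (M+1) (d+5) := by
  induction M with
  | zero =>
    intro d
    rw [cc_zero, if_neg (by omega)]
    simpa using cc_nonneg ha hb 1 (d+5)
  | succ K ihK =>
    have hKn : K ≤ n := by omega
    have hKb : ((K:ℕ):ℤ) ≤ b := by
      have : ((K:ℕ):ℤ) ≤ (n:ℤ) := by exact_mod_cast hKn
      linarith
    have hK1b : ((K+1:ℕ):ℤ) ≤ b := by
      have : ((K+1:ℕ):ℤ) ≤ (n:ℤ) := by exact_mod_cast hMn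
      linarith
    match K, ihK with
    | 0, _ =>
      -- base case M = 1
      intro d
      match d with
      | 0 =>
        have h5 : cc a b 2 5 = a * cc a b 1 5 + b * cc a b 1 4 + a * cc a b 1 2 + a * cc a b 1 1 := by
          rw [show (5:ℕ) = 1+4 from rfl, ccR4]
        rw [h5, cc_one_3, cc_one_ge5 0, cc_one_4, cc_one_2, cc_one_1]
        have : (n:ℤ) * a ≤ b * a := mul_le_mul_of_nonneg_right hn ha
        have hab := mul_nonneg ha hb
        nlinarith
      | 1 =>
        have h6 : cc a b 2 6 = a * cc a b 1 6 + b * cc a b 1 5 + a * cc a b 1 3 + a * cc a b 1 2 := by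
          rw [show (6:ℕ) = 2+4 from rfl, ccR4]
        rw [h6, cc_one_4, cc_one_ge5 0, cc_one_ge5 1, cc_one_3, cc_one_2]
        have : (n:ℤ) * a ≤ a * a := mul_le_mul_of_nonneg_right han ha
        nlinarith
      | (e+2) =>
        rw [show e+2+3 = e+5 from rfl, cc_one_ge5 e]
        simpa using cc_nonneg ha hb 2 (e+2+5)
    | (j+1), ih =>
      -- step: K = j+1 ≥ 1, M = K+1 = j+2
      have IH : ∀ d : ℕ, (n:ℤ) * cc a b (j+1) (d+3) ≤ cc a b (j+2) (d+5) := ih hKn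
      intro d
      have hnn := cc_nonneg (a := a) (b := b) ha hb
      match d with
      | 0 =>
        -- n * cc (j+2) 3 ≤ cc (j+3) 5
        rw [show (j:ℕ)+1+1 = (j+1)+1 from rfl, ccR3]
        have hR : cc a b (j+3) 5 = a * cc a b (j+2) 5 + b * cc a b (j+2) 4
            + a * cc a b (j+2) 2 + a * cc a b (j+2) 1 := by
          rw [show (5:ℕ) = 1+4 from rfl, show (j:ℕ)+3 = (j+2)+1 from rfl, ccR4]
        rw [show (j:ℕ)+1+1+1 = j+3 from rfl, hR]
        have m1 : (n:ℤ) * (a * cc a b (j+1) 3) ≤ a * cc a b (j+2) 5 := by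
          have := mul_le_mul_of_nonneg_left (IH 0) ha
          calc (n:ℤ) * (a * cc a b (j+1) 3) = a * ((n:ℤ) * cc a b (j+1) (0+3)) := by ring
          _ ≤ a * cc a b (j+2) (0+5) := this
          _ = a * cc a b (j+2) 5 := rfl
        have m2 : (n:ℤ) * (b * cc a b (j+1) 2) ≤ b * cc a b (j+2) 4 := by
          have := mul_le_mul_of_nonneg_left (ccSA ha hb hn hba (j+1) hKb) hb
          calc (n:ℤ) * (b * cc a b (j+1) 2) = b * ((n:ℤ) * cc a b (j+1) 2) := by ring
          _ ≤ b * cc a b (j+2) 4 := this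
        have m3 : (n:ℤ) * (a * cc a b (j+1) 0) ≤ a * cc a b (j+2) 1 := by
          have := mul_le_mul_of_nonneg_left (ccSC ha hb hn (j+1)) ha
          calc (n:ℤ) * (a * cc a b (j+1) 0) = a * ((n:ℤ) * cc a b (j+1) 0) := by ring
          _ ≤ a * cc a b (j+2) 1 := this
        have hp2 := mul_nonneg ha (hnn (j+2) 2)
        ring_nf
        ring_nf at m1 m2 m3 hp2
        linarith
      | 1 =>
        have mulIH : ∀ (x : ℤ), 0 ≤ x → ∀ (u v : ℤ), (n:ℤ)*u ≤ v → (n:ℤ)*(x*u) ≤ x*v := by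
          intro x hx u v h
          calc (n:ℤ)*(x*u) = x*((n:ℤ)*u) := by ring
          _ ≤ x*v := mul_le_mul_of_nonneg_left h hx
        show (n:ℤ) * cc a b ((j+1)+1) (0+4) ≤ cc a b ((j+2)+1) (2+4)
        rw [ccR4 (j+1) 0, ccR4 (j+2) 2]
        have i1 : (n:ℤ) * cc a b (j+1) (0+4) ≤ cc a b (j+2) (2+4) := IH 1
        have i2 : (n:ℤ) * cc a b (j+1) (0+3) ≤ cc a b (j+2) (2+3) := IH 0
        have i3 := ccSD ha hb hn hba han j hKb
        have m1 := mulIH a ha _ _ i1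
        have m2 := mulIH b hb _ _ i2
        have m3 : (n:ℤ) * (a * cc a b (j+1) 1) + (n:ℤ) * (a * cc a b (j+1) (0+0)) ≤ a * cc a b (j+2) (2+1) := by
          calc (n:ℤ) * (a * cc a b (j+1) 1) + (n:ℤ) * (a * cc a b (j+1) (0+0))
              = a * ((n:ℤ) * cc a b (j+1) 1 + (n:ℤ) * cc a b (j+1) 0) := by ring
          _ ≤ a * cc a b (j+2) 3 := mul_le_mul_of_nonneg_left i3 ha
        have hp := mul_nonneg ha (hnn (j+2) 2)
        norm_num at m1 m2 m3 hp ⊢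
        linarith
      | 2 =>
        have mulIH : ∀ (x : ℤ), 0 ≤ x → ∀ (u v : ℤ), (n:ℤ)*u ≤ v → (n:ℤ)*(x*u) ≤ x*v := by
          intro x hx u v h
          calc (n:ℤ)*(x*u) = x*((n:ℤ)*u) := by ring
          _ ≤ x*v := mul_le_mul_of_nonneg_left h hx
        show (n:ℤ) * cc a b ((j+1)+1) (1+4) ≤ cc a b ((j+2)+1) (3+4)
        rw [ccR4 (j+1) 1, ccR4 (j+2) 3]
        have i1 : (n:ℤ) * cc a b (j+1) (1+4) ≤ cc a b (j+2) (3+4) := IH 2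
        have i2 : (n:ℤ) * cc a b (j+1) (1+3) ≤ cc a b (j+2) (3+3) := IH 1
        have i3 : (n:ℤ) * cc a b (j+1) (1+1) ≤ cc a b (j+2) (3+1) := ccSA ha hb hn hba (j+1) hKb
        have i4 : (n:ℤ) * cc a b (j+1) 1 ≤ cc a b (j+2) 3 := ccSB ha hb hn hba (j+1) hKb
        have m1 := mulIH a ha _ _ i1
        have m2 := mulIH b hb _ _ i2
        have m3 := mulIH a ha _ _ i3
        have m4 := mulIH a ha _ _ i4
        norm_num at m1 m2 m3 m4 ⊢
        linarith
      | 3 =>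
        have mulIH : ∀ (x : ℤ), 0 ≤ x → ∀ (u v : ℤ), (n:ℤ)*u ≤ v → (n:ℤ)*(x*u) ≤ x*v := by
          intro x hx u v h
          calc (n:ℤ)*(x*u) = x*((n:ℤ)*u) := by ring
          _ ≤ x*v := mul_le_mul_of_nonneg_left h hx
        show (n:ℤ) * cc a b ((j+1)+1) (2+4) ≤ cc a b ((j+2)+1) (4+4)
        rw [ccR4 (j+1) 2, ccR4 (j+2) 4]
        have i1 : (n:ℤ) * cc a b (j+1) (2+4) ≤ cc a b (j+2) (4+4) := IH 3
        have i2 : (n:ℤ) * cc a b (j+1) (2+3) ≤ cc a b (j+2) (4+3) := IH 2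
        have i3 : (n:ℤ) * cc a b (j+1) (2+1) ≤ cc a b (j+2) (4+1) := IH 0
        have i4 : (n:ℤ) * cc a b (j+1) 2 ≤ cc a b (j+2) 4 := ccSA ha hb hn hba (j+1) hKb
        have m1 := mulIH a ha _ _ i1
        have m2 := mulIH b hb _ _ i2
        have m3 := mulIH a ha _ _ i3
        have m4 := mulIH a ha _ _ i4
        norm_num at m1 m2 m3 m4 ⊢
        linarith
      | (e+4) =>
        have mulIH : ∀ (x : ℤ), 0 ≤ x → ∀ (u v : ℤ), (n:ℤ)*u ≤ v → (n:ℤ)*(x*u) ≤ x*v := by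
          intro x hx u v h
          calc (n:ℤ)*(x*u) = x*((n:ℤ)*u) := by ring
          _ ≤ x*v := mul_le_mul_of_nonneg_left h hx
        show (n:ℤ) * cc a b ((j+1)+1) ((e+3)+4) ≤ cc a b ((j+2)+1) ((e+5)+4)
        rw [ccR4 (j+1) (e+3), ccR4 (j+2) (e+5)]
        have i1 : (n:ℤ) * cc a b (j+1) ((e+3)+4) ≤ cc a b (j+2) ((e+5)+4) := IH (e+4)
        have i2 : (n:ℤ) * cc a b (j+1) ((e+3)+3) ≤ cc a b (j+2) ((e+5)+3) := IH (e+3)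
        have i3 : (n:ℤ) * cc a b (j+1) ((e+3)+1) ≤ cc a b (j+2) ((e+5)+1) := IH (e+1)
        have i4 : (n:ℤ) * cc a b (j+1) (e+3) ≤ cc a b (j+2) (e+5) := IH e
        have m1 := mulIH a ha _ _ i1
        have m2 := mulIH b hb _ _ i2
        have m3 := mulIH a ha _ _ i3
        have m4 := mulIH a ha _ _ i4
        norm_num at m1 m2 m3 m4 ⊢
        linarith
end NegAux
namespace NegAux
variable {a b : ℤ} {n : ℕ}

lemma coeff_pow (N m : ℕ) :
    ((Pa a b - X^2)^N).coeff m
      = ∑ k ∈ Finset.range (N+1), (-1:ℤ)^k *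
        ((N.choose k : ℤ) * (if 2*k ≤ m then cc a b (N-k) (m - 2*k) else 0)) := by
  have hcomm : Commute (-X^2 : ℤ[X]) (Pa a b) := Commute.all _ _
  have h : (Pa a b - X^2)^N
      = ∑ k ∈ Finset.range (N+1), (-X^2 : ℤ[X])^k * Pa a b^(N-k) * (N.choose k : ℤ[X]) := by
    rw [show Pa a b - X^2 = -X^2 + Pa a b by ring, hcomm.add_pow]
  rw [h, finset_sum_coeff]
  apply Finset.sum_congr rfl
  intro k hk
  have e1 : ((-X^2 : ℤ[X]))^k * Pa a b^(N-k) * (N.choose k : ℤ[X])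
      = C ((-1:ℤ)^k) * (C ((N.choose k : ℤ)) * (Pa a b^(N-k) * X^(2*k))) := by
    rw [neg_pow]
    rw [show ((X:ℤ[X])^2)^k = X^(2*k) by rw [← pow_mul]]
    rw [show ((-1 : ℤ[X]))^k = C ((-1:ℤ)^k) by rw [map_pow, map_neg, map_one]]
    rw [show ((N.choose k : ℤ[X])) = C ((N.choose k : ℤ)) by rw [C_eq_natCast]]
    ring
  rw [e1, coeff_C_mul, coeff_C_mul, coeff_mul_X_pow']
  unfold cc
  split_ifs <;> ring

lemma alt_even (f : ℕ → ℤ) (t : ℕ) (h : ∀ j, j < t → f (2*j+1) ≤ f (2*j)) :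
    0 ≤ ∑ k ∈ Finset.range (2*t), (-1:ℤ)^k * f k := by
  induction t with
  | zero => simp
  | succ s ih =>
    rw [show 2*(s+1) = (2*s)+1+1 by ring, Finset.sum_range_succ, Finset.sum_range_succ]
    have h1 := ih (fun j hj => h j (by omega))
    have h2 := h s (by omega)
    have e1 : ((-1:ℤ))^(2*s) = 1 := by rw [pow_mul]; norm_num
    have e2 : ((-1:ℤ))^(2*s+1) = -1 := by rw [pow_succ, e1]; norm_num
    rw [e1, e2]
    linarith

lemma alt_odd (f : ℕ → ℤ) (t : ℕ) (h : ∀ j, j < t → f (2*j+1) ≤ f (2*j))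
    (h0 : 0 ≤ f (2*t)) :
    0 ≤ ∑ k ∈ Finset.range (2*t+1), (-1:ℤ)^k * f k := by
  rw [Finset.sum_range_succ]
  have h1 := alt_even f t h
  have e1 : ((-1:ℤ))^(2*t) = 1 := by rw [pow_mul]; norm_num
  rw [e1]
  linarith

end NegAux
namespace NegAux
variable {a b : ℤ} {n : ℕ}

lemma vpair (ha : 0 ≤ a) (hb : 0 ≤ b) (hn : (n:ℤ) ≤ b) (han : (n:ℤ) ≤ a) (hba : b^3 ≤ a^2)
    (hub : 2*a ≤ ((n:ℤ)-1)*b^2)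
    (m k : ℕ) (hk1 : k + 1 ≤ n) (hsp : m ≠ 2*n ∨ k+1 ≠ n) :
    (n.choose (k+1) : ℤ) * (if 2*(k+1) ≤ m then cc a b (n-(k+1)) (m - 2*(k+1)) else 0)
      ≤ (n.choose k : ℤ) * (if 2*k ≤ m then cc a b (n-k) (m - 2*k) else 0) := by
  have hcc := cc_nonneg (a := a) (b := b) ha hb
  by_cases hm : 2*(k+1) ≤ m
  case neg =>
    rw [if_neg hm, mul_zero]
    split_ifs with h
    · exact mul_nonneg (by positivity) (hcc _ _)
    · simp
  case pos =>
    obtain ⟨M, hMj⟩ : ∃ M', n - (k+1) = M' := ⟨_, rfl⟩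
    obtain ⟨d, hdj⟩ : ∃ d', m - 2*(k+1) = d' := ⟨_, rfl⟩
    have hnk : n - k = M + 1 := by omega
    have hd : m - 2*k = d + 2 := by omega
    rw [if_pos hm, if_pos (show 2*k ≤ m by omega), hnk, hd, hMj, hdj]
    have hMn : M + 1 ≤ n := by omega
    have hch : ((k:ℤ)+1) * (n.choose (k+1) : ℤ) = ((M:ℤ)+1) * (n.choose k : ℤ) := by
      have h1 := Nat.choose_succ_right_eq n k
      rw [hnk] at h1
      have h2 : ((n.choose (k+1) * (k+1) : ℕ) : ℤ) = ((n.choose k * (M+1) : ℕ) : ℤ) := by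
        exact_mod_cast congrArg (Nat.cast (R := ℤ)) h1
      push_cast at h2
      linarith
    have hchk : (0:ℤ) ≤ (n.choose k : ℤ) := by positivity
    have hpos1 : (0:ℤ) < (k:ℤ)+1 := by positivity
    have hpos2 : (0:ℤ) < 2*((k:ℤ)+1) := by positivity
    rcases d with _ | (_ | (_ | e))
    · -- d = 0 : m = 2*(k+1), so k+1 ≠ n, so M ≥ 1
      have hkn : k + 1 ≠ n := by
        rcases hsp with h | h
        · intro hc; exact h (by omega)
        · exact h
      obtain ⟨e, he⟩ : ∃ e, M = e + 1 := ⟨M - 1, by omega⟩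
      subst he
      rw [ccF0]
      have hF2 := ccF2 (a := a) (b := b) e
      apply le_of_mul_le_mul_left _ hpos2
      show 2*((k:ℤ)+1) * ((n.choose (k+1) : ℤ) * a^(e+1))
        ≤ 2*((k:ℤ)+1) * ((n.choose k : ℤ) * cc a b (e+2) 2)
      have hkey : 2*a ≤ ((k:ℤ)+1)*((e:ℤ)+1)*b^2 := by
        have h1 : ((n:ℤ)-1) ≤ ((k:ℤ)+1)*((e:ℤ)+1) := by
          have hneq : (n:ℤ) = (k:ℤ) + (e:ℤ) + 2 := by
            have : n = k + e + 2 := by omega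
            exact_mod_cast this
          nlinarith [Int.natCast_nonneg k, Int.natCast_nonneg e]
        have h2 : ((n:ℤ)-1)*b^2 ≤ ((k:ℤ)+1)*((e:ℤ)+1)*b^2 :=
          mul_le_mul_of_nonneg_right h1 (by positivity)
        linarith
      calc 2*((k:ℤ)+1) * ((n.choose (k+1) : ℤ) * a^(e+1))
          = ((((k:ℤ)+1) * (n.choose (k+1) : ℤ))) * ((2*a) * a^e) := by
            rw [show a^(e+1) = a*a^e from by rw [pow_succ]; ring]; ring
      _ = (((e:ℤ)+2) * (n.choose k : ℤ)) * ((2*a) * a^e) := by rw [hch]; push_cast; ring_nf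
      _ ≤ (((e:ℤ)+2) * (n.choose k : ℤ)) * ((((k:ℤ)+1)*((e:ℤ)+1)*b^2) * a^e) := by
          apply mul_le_mul_of_nonneg_left _ (by positivity)
          exact mul_le_mul_of_nonneg_right hkey (pow_nonneg ha e)
      _ = ((k:ℤ)+1) * ((n.choose k : ℤ) * (((e:ℤ)+2)*((e:ℤ)+1)*b^2*a^e)) := by ring
      _ = ((k:ℤ)+1) * ((n.choose k : ℤ) * (2 * cc a b (e+2) 2)) := by
            rw [hF2] <;> (push_cast; ring_nf)
      _ = 2*((k:ℤ)+1) * ((n.choose k : ℤ) * cc a b (e+2) 2) := by ring_nf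
    · -- d = 1
      rcases M with _ | e
      · rw [show cc a b 0 1 = 0 from by rw [cc_zero]; norm_num, mul_zero]
        exact mul_nonneg hchk (hcc _ _)
      · rw [ccF1]
        have h3 := ccAUX3 ha hb (e+1)
        apply le_of_mul_le_mul_left _ hpos1
        show ((k:ℤ)+1) * ((n.choose (k+1) : ℤ) * (((e:ℤ)+1) * b * a^e))
          ≤ ((k:ℤ)+1) * ((n.choose k : ℤ) * cc a b (e+2) 3)
        have he2n : ((e:ℤ)+2) ≤ (n:ℤ) := by exact_mod_cast hMn
        have hkey : ((e:ℤ)+2)*(((e:ℤ)+1)*b) ≤ a^2 := by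
          calc ((e:ℤ)+2)*(((e:ℤ)+1)*b) ≤ b*(b*b) := by
                apply mul_le_mul (le_trans he2n hn) _ (by positivity) hb
                apply mul_le_mul _ le_rfl hb hb
                linarith
          _ = b^3 := by ring
          _ ≤ a^2 := hba
        calc ((k:ℤ)+1) * ((n.choose (k+1) : ℤ) * (((e:ℤ)+1) * b * a^e))
            = (((k:ℤ)+1) * (n.choose (k+1) : ℤ)) * (((e:ℤ)+1) * b * a^e) := by ring
        _ = (((e:ℤ)+2) * (n.choose k : ℤ)) * (((e:ℤ)+1) * b * a^e) := by
            rw [hch]; push_cast; ring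
        _ = (n.choose k : ℤ) * ((((e:ℤ)+2)*(((e:ℤ)+1)*b)) * a^e) := by ring
        _ ≤ (n.choose k : ℤ) * (a^2 * a^e) := by
            apply mul_le_mul_of_nonneg_left _ hchk
            exact mul_le_mul_of_nonneg_right hkey (pow_nonneg ha e)
        _ = (n.choose k : ℤ) * a^(e+2) := by rw [show a^(e+2) = a^2*a^e from by ring]
        _ ≤ (n.choose k : ℤ) * cc a b (e+2) 3 := mul_le_mul_of_nonneg_left h3 hchk
        _ ≤ ((k:ℤ)+1) * ((n.choose k : ℤ) * cc a b (e+2) 3) :=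
            le_mul_of_one_le_left (mul_nonneg hchk (hcc _ _)) (by linarith)
    · -- d = 2
      rcases M with _ | (_ | e)
      · rw [show cc a b 0 2 = 0 from by rw [cc_zero]; norm_num, mul_zero]
        exact mul_nonneg hchk (hcc _ _)
      · rw [cc_one_2, mul_zero]
        exact mul_nonneg hchk (hcc _ _)
      · have hF2 := ccF2 (a := a) (b := b) e
        have hR : cc a b (e+3) 4 = a * cc a b (e+2) 4 + b * cc a b (e+2) 3
            + a * cc a b (e+2) 1 + a * cc a b (e+2) 0 := by
          rw [show (4:ℕ) = 0+4 from rfl, show (e:ℕ)+3 = (e+2)+1 from rfl, ccR4]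
        have hlow : a * cc a b (e+2) 1 ≤ cc a b (e+3) 4 := by
          rw [hR]
          have n1 := mul_nonneg ha (hcc (e+2) 4)
          have n2 := mul_nonneg hb (hcc (e+2) 3)
          have n3 := mul_nonneg ha (hcc (e+2) 0)
          linarith
        have hc1 : cc a b (e+2) 1 = ((e:ℤ)+2) * b * a^(e+1) := by
          rw [show (e:ℕ)+2 = (e+1)+1 from rfl, ccF1]; push_cast; ring
        apply le_of_mul_le_mul_left _ hpos2
        show 2*((k:ℤ)+1) * ((n.choose (k+1) : ℤ) * cc a b (e+2) 2)
          ≤ 2*((k:ℤ)+1) * ((n.choose k : ℤ) * cc a b (e+3) 4)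
        have he3n : ((e:ℤ)+3) ≤ (n:ℤ) := by exact_mod_cast hMn
        have hkey : ((e:ℤ)+3)*(((e:ℤ)+1)*b) ≤ a^2 := by
          calc ((e:ℤ)+3)*(((e:ℤ)+1)*b) ≤ b*(b*b) := by
                apply mul_le_mul (le_trans he3n hn) _ (by positivity) hb
                apply mul_le_mul _ le_rfl hb hb
                linarith
          _ = b^3 := by ring
          _ ≤ a^2 := hba
        calc 2*((k:ℤ)+1) * ((n.choose (k+1) : ℤ) * cc a b (e+2) 2)
            = (((k:ℤ)+1) * (n.choose (k+1) : ℤ)) * (2 * cc a b (e+2) 2) := by ring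
        _ = (((e:ℤ)+3) * (n.choose k : ℤ)) * (((e:ℤ)+2)*((e:ℤ)+1)*b^2*a^e) := by
            rw [hch, hF2]; push_cast; ring
        _ = (n.choose k : ℤ) * ((((e:ℤ)+3)*(((e:ℤ)+1)*b)) * (((e:ℤ)+2)*b*a^e)) := by ring
        _ ≤ (n.choose k : ℤ) * (a^2 * (((e:ℤ)+2)*b*a^e)) := by
            apply mul_le_mul_of_nonneg_left _ hchk
            apply mul_le_mul_of_nonneg_right hkey
            positivity
        _ = (n.choose k : ℤ) * (a * (((e:ℤ)+2) * b * a^(e+1))) := by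
            rw [show a^(e+1) = a*a^e from by rw [pow_succ]; ring]; ring
        _ = (n.choose k : ℤ) * (a * cc a b (e+2) 1) := by rw [hc1]
        _ ≤ (n.choose k : ℤ) * cc a b (e+3) 4 := mul_le_mul_of_nonneg_left hlow hchk
        _ ≤ 2*((k:ℤ)+1) * ((n.choose k : ℤ) * cc a b (e+3) 4) :=
            le_mul_of_one_le_left (mul_nonneg hchk (hcc _ _)) (by linarith)
    · -- d = e+3
      have hclaim := ccClaim ha hb hn hba han M (show M ≤ n by omega) e
      apply le_of_mul_le_mul_left _ hpos1
      show ((k:ℤ)+1) * ((n.choose (k+1) : ℤ) * cc a b M (e+3))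
        ≤ ((k:ℤ)+1) * ((n.choose k : ℤ) * cc a b (M+1) (e+5))
      have hMnz : ((M:ℤ)+1) ≤ (n:ℤ) := by exact_mod_cast hMn
      calc ((k:ℤ)+1) * ((n.choose (k+1) : ℤ) * cc a b M (e+3))
          = (((k:ℤ)+1) * (n.choose (k+1) : ℤ)) * cc a b M (e+3) := by ring
      _ = (((M:ℤ)+1) * (n.choose k : ℤ)) * cc a b M (e+3) := by rw [hch]
      _ = (n.choose k : ℤ) * (((M:ℤ)+1) * cc a b M (e+3)) := by ring
      _ ≤ (n.choose k : ℤ) * ((n:ℤ) * cc a b M (e+3)) := by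
          apply mul_le_mul_of_nonneg_left _ hchk
          exact mul_le_mul_of_nonneg_right hMnz (hcc M (e+3))
      _ ≤ (n.choose k : ℤ) * cc a b (M+1) (e+5) := mul_le_mul_of_nonneg_left hclaim hchk
      _ ≤ ((k:ℤ)+1) * ((n.choose k : ℤ) * cc a b (M+1) (e+5)) :=
          le_mul_of_one_le_left (mul_nonneg hchk (hcc _ _)) (by linarith)

end NegAux
namespace NegAux
variable {a b : ℤ} {n : ℕ}

lemma alt_special (f : ℕ → ℤ) (t : ℕ) (t1 : 1 ≤ t) (h : ∀ j, j < t-1 → f (2*j+1) ≤ f (2*j))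
    (h4 : f (2*(t-1)+1) + f (2*(t-1)+3) ≤ f (2*(t-1)) + f (2*(t-1)+2)) :
    0 ≤ ∑ k ∈ Finset.range (2*t+2), (-1:ℤ)^k * f k := by
  rw [show 2*t+2 = (2*(t-1)+1+1+1)+1 by omega, Finset.sum_range_succ,
    show 2*(t-1)+1+1+1 = (2*(t-1)+1+1)+1 from rfl, Finset.sum_range_succ,
    show 2*(t-1)+1+1 = (2*(t-1)+1)+1 from rfl, Finset.sum_range_succ,
    Finset.sum_range_succ]
  have hS := alt_even f (t-1) h
  have e0 : ((-1:ℤ))^(2*(t-1)) = 1 := by rw [pow_mul]; norm_num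
  have e1 : ((-1:ℤ))^(2*(t-1)+1) = -1 := by rw [pow_succ, e0]; norm_num
  have e2 : ((-1:ℤ))^(2*(t-1)+1+1) = 1 := by rw [pow_succ, e1]; norm_num
  have e3 : ((-1:ℤ))^(2*(t-1)+1+1+1) = -1 := by rw [pow_succ, e2]; norm_num
  rw [e0, e1, e2, e3]
  have hx2 : 2*(t-1)+1+1 = 2*(t-1)+2 := rfl
  have hx3 : 2*(t-1)+1+1+1 = 2*(t-1)+3 := rfl
  rw [hx2, hx3]
  linarith

lemma cc24 : cc a b 2 4 = 2*a^2 + 2*a*b := by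
  have h := ccR4 (a := a) (b := b) 1 0
  rw [show (0:ℕ)+4 = 4 from rfl] at h
  rw [h, cc_one_4, cc_one_3, cc_one_1, cc_one_0]
  ring

lemma cc36 : cc a b 3 6 = 3*a^3 + 3*a*b^2 := by
  have h26 : cc a b 2 6 = a^2 := by
    have h := ccR4 (a := a) (b := b) 1 2
    rw [show (2:ℕ)+4 = 6 from rfl, show (2:ℕ)+3 = 5 from rfl, show (2:ℕ)+1 = 3 from rfl] at h
    rw [h, show cc a b 1 6 = 0 from cc_one_ge5 1, show cc a b 1 5 = 0 from cc_one_ge5 0,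
      cc_one_3, cc_one_2]
    ring
  have h25 : cc a b 2 5 = 2*a*b := by
    have h := ccR4 (a := a) (b := b) 1 1
    rw [show (1:ℕ)+4 = 5 from rfl, show (1:ℕ)+3 = 4 from rfl, show (1:ℕ)+1 = 2 from rfl] at h
    rw [h, show cc a b 1 5 = 0 from cc_one_ge5 0, cc_one_4, cc_one_2, cc_one_1]
    ring
  have h23 : cc a b 2 3 = 2*a^2 := by
    rw [ccR3, cc_one_3, cc_one_2, cc_one_0]; ring
  have h22 : cc a b 2 2 = b^2 := by
    rw [ccR2, cc_one_2, cc_one_1]; ring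
  have h := ccR4 (a := a) (b := b) 2 2
  rw [show (2:ℕ)+4 = 6 from rfl, show (2:ℕ)+3 = 5 from rfl, show (2:ℕ)+1 = 3 from rfl] at h
  rw [h, h26, h25, h23, h22]
  ring

lemma part2 (ha : 0 ≤ a) (hb : 0 ≤ b) (hn : (n:ℤ) ≤ b) (han : (n:ℤ) ≤ a) (hba : b^3 ≤ a^2)
    (hub : 2*a ≤ ((n:ℤ)-1)*b^2) (hn2 : 2 ≤ n) (ha3 : 3 ≤ a) (hb2 : 2 ≤ b) :
    ∀ m : ℕ, 0 ≤ ((Pa a b - X^2)^n).coeff m := by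
  intro m
  rw [coeff_pow]
  have hcc := cc_nonneg (a := a) (b := b) ha hb
  have hf0 : ∀ k : ℕ, (0:ℤ) ≤ (n.choose k : ℤ) * (if 2*k ≤ m then cc a b (n-k) (m - 2*k) else 0) := by
    intro k
    apply mul_nonneg (by positivity)
    split_ifs
    · exact hcc _ _
    · exact le_refl 0
  by_cases hpar : n % 2 = 0
  · -- n even
    obtain ⟨t, ht⟩ : ∃ t, n = 2*t := ⟨n/2, by omega⟩
    rw [show n+1 = 2*t+1 by omega]
    apply alt_odd _ t _ (hf0 (2*t))
    intro j hj
    exact vpair ha hb hn han hba hub m (2*j) (by omega) (Or.inr (by omega))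
  · by_cases hm2n : m = 2*n
    · -- n odd, m = 2n : the special case
      obtain ⟨t, ht⟩ : ∃ t, n = 2*t+1 := ⟨n/2, by omega⟩
      have ht1 : 1 ≤ t := by omega
      rw [show n+1 = 2*t+2 by omega]
      apply alt_special _ t ht1
      · intro j hj
        exact vpair ha hb hn han hba hub m (2*j) (by omega) (Or.inr (by omega))
      · -- the four-term inequality
        rw [show 2*(t-1) = n-3 by omega, show n-3+1 = n-2 by omega,
          show n-3+3 = n by omega, show n-3+2 = n-1 by omega]
        have hfn : (n.choose n : ℤ) * (if 2*n ≤ m then cc a b (n-n) (m - 2*n) else 0) = 1 := by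
          rw [Nat.choose_self, if_pos (by omega), Nat.sub_self, show m - 2*n = 0 by omega, cc_zero]
          norm_num
        have hfn1 : (n.choose (n-1) : ℤ) * (if 2*(n-1) ≤ m then cc a b (n-(n-1)) (m - 2*(n-1)) else 0) = 0 := by
          rw [if_pos (by omega), show n-(n-1) = 1 by omega, show m - 2*(n-1) = 2 by omega, cc_one_2]
          norm_num
        have hfn2 : (n.choose (n-2) : ℤ) * (if 2*(n-2) ≤ m then cc a b (n-(n-2)) (m - 2*(n-2)) else 0)
            = (n.choose 2 : ℤ) * (2*a^2 + 2*a*b) := by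
          rw [if_pos (by omega), show n-(n-2) = 2 by omega, show m - 2*(n-2) = 4 by omega, cc24,
            show n.choose (n-2) = n.choose 2 by rw [← Nat.choose_symm (by omega : 2 ≤ n), show n-2 = n-2 from rfl]]
        have hfn3 : (n.choose (n-3) : ℤ) * (if 2*(n-3) ≤ m then cc a b (n-(n-3)) (m - 2*(n-3)) else 0)
            = (n.choose 3 : ℤ) * (3*a^3 + 3*a*b^2) := by
          rw [if_pos (by omega), show n-(n-3) = 3 by omega, show m - 2*(n-3) = 6 by omega, cc36,
            show n.choose (n-3) = n.choose 3 by rw [← Nat.choose_symm (by omega : 3 ≤ n), show n-3 = n-3 from rfl]]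
        rw [hfn, hfn1, hfn2, hfn3]
        -- goal : ch2*(2a²+2ab) + 1 ≤ ch3*(3a³+3ab²) + 0
        have hch : (n.choose 3 : ℤ) * 3 = ((n:ℤ)-2) * (n.choose 2 : ℤ) := by
          have h1 := Nat.choose_succ_right_eq n 2
          have h2 : ((n.choose 3 * 3 : ℕ) : ℤ) = ((n.choose 2 * (n-2) : ℕ) : ℤ) := by
            exact_mod_cast congrArg (Nat.cast (R := ℤ)) h1
          push_cast [Nat.cast_sub (show 2 ≤ n by omega)] at h2
          linarith
        have hc2pos : (1:ℤ) ≤ (n.choose 2 : ℤ) := by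
          have := Nat.choose_pos (show 2 ≤ n by omega)
          exact_mod_cast this
        have hn3 : (3:ℤ) ≤ (n:ℤ) := by exact_mod_cast (show 3 ≤ n by omega)
        have hgap : 2*a^2 + 2*a*b + 1 ≤ a^3 + a*b^2 := by
          have h1 : 0 ≤ a*b*(b-2) := mul_nonneg (mul_nonneg ha hb) (by linarith)
          have h2 : 3*a ≤ a*a := mul_le_mul_of_nonneg_right ha3 ha
          have h3 : 0 ≤ a*a*(a-3) := mul_nonneg (mul_nonneg ha ha) (by linarith)
          nlinarith [h1, h2, h3]
        have e1 : (n.choose 3 : ℤ) * (3*a^3 + 3*a*b^2) = ((n:ℤ)-2) * ((n.choose 2:ℤ) * (a^3 + a*b^2)) := by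
          linear_combination (a^3 + a*b^2) * hch
        have e2 : ((n:ℤ)-2) * ((n.choose 2:ℤ) * (a^3 + a*b^2)) ≥ 1 * ((n.choose 2:ℤ) * (a^3 + a*b^2)) := by
          have hX : (0:ℤ) ≤ (n.choose 2:ℤ) * (a^3 + a*b^2) :=
            mul_nonneg (by positivity) (add_nonneg (pow_nonneg ha 3) (mul_nonneg ha (pow_nonneg hb 2)))
          exact mul_le_mul_of_nonneg_right (by linarith) hX
        have e3 : (n.choose 2:ℤ) * (a^3 + a*b^2) ≥ (n.choose 2:ℤ) * (2*a^2 + 2*a*b) + 1 := by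
          nlinarith [hgap, hc2pos]
        linarith
    · -- n odd, m ≠ 2n
      obtain ⟨t, ht⟩ : ∃ t, n = 2*t+1 := ⟨n/2, by omega⟩
      rw [show n+1 = 2*(t+1) by omega]
      apply alt_even
      intro j hj
      exact vpair ha hb hn han hba hub m (2*j) (by omega) (Or.inl hm2n)

end NegAux
namespace NegAux
variable {a b : ℤ} {n : ℕ}

lemma part1 (ha : 0 ≤ a) (hb : 0 ≤ b) (ha1 : 1 ≤ a) (hb2 : 2 ≤ b)
    (hlb : ((n:ℤ)-1)*b^2 - 1 ≤ 2*a)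
    (K : ℕ) (hK : 1 ≤ K) (hlt : K < n) : ((Pa a b - X^2)^K).coeff 2 < 0 := by
  rw [coeff_pow]
  have hsplit : ∑ k ∈ Finset.range (K+1), (-1:ℤ)^k *
      ((K.choose k : ℤ) * (if 2*k ≤ 2 then cc a b (K-k) (2 - 2*k) else 0))
      = cc a b K 2 - (K:ℤ) * cc a b (K-1) 0 := by
    rw [← Finset.sum_range_add_sum_Ico _ (show 2 ≤ K+1 by omega)]
    have h2 : ∑ k ∈ Finset.Ico 2 (K+1), (-1:ℤ)^k *
        ((K.choose k : ℤ) * (if 2*k ≤ 2 then cc a b (K-k) (2 - 2*k) else 0)) = 0 := by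
      apply Finset.sum_eq_zero
      intro k hk
      rw [Finset.mem_Ico] at hk
      rw [if_neg (by omega)]
      ring
    rw [h2, Finset.sum_range_succ, Finset.sum_range_one]
    rw [if_pos (by omega), if_pos (by omega)]
    simp [Nat.choose_one_right]
    ring
  rw [hsplit]
  rcases K with _ | (_ | e)
  · omega
  · -- K = 1
    rw [cc_one_2, cc_zero]
    norm_num
  · -- K = e+2
    have hF2 := ccF2 (a := a) (b := b) e
    have hF0 : cc a b (e+2-1) 0 = a^(e+1) := by
      rw [show (e:ℕ)+2-1 = e+1 from rfl, ccF0]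
    rw [hF0]
    have he1n : ((e:ℤ)+1) ≤ (n:ℤ) - 2 := by
      have : ((e:ℕ)+3 : ℤ) ≤ (n:ℤ) := by exact_mod_cast hlt
      push_cast at this ⊢
      linarith
    have hb2' : (4:ℤ) ≤ b^2 := by nlinarith
    have hkey : ((e:ℤ)+1)*b^2 - 2*a < 0 := by
      have : ((e:ℤ)+1)*b^2 ≤ ((n:ℤ)-2)*b^2 := by
        apply mul_le_mul_of_nonneg_right he1n (by positivity)
      nlinarith
    have hap : (0:ℤ) < a^e := pow_pos (by linarith) e
    have h2 : 2 * (cc a b (e+2) 2 - ((e:ℕ)+2 : ℤ) * a^(e+1))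
        = ((e:ℤ)+2) * a^e * (((e:ℤ)+1)*b^2 - 2*a) := by
      rw [mul_sub, hF2]
      push_cast
      rw [show a^(e+1) = a*a^e from by rw [pow_succ]; ring]
      ring
    have hneg : 2 * (cc a b (e+2) 2 - ((e:ℕ)+2 : ℤ) * a^(e+1)) < 0 := by
      rw [h2]
      apply mul_neg_of_pos_of_neg _ hkey
      positivity
    push_cast at hneg ⊢
    linarith

lemma termco (x : ℤ) (hx : 0 ≤ x) (k j : ℕ) : 0 ≤ (C x * X^k).coeff j := by
  rw [coeff_C_mul, coeff_X_pow]
  split_ifs <;> simp [hx]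

lemma part3 (ha1 : 1 ≤ a) (hb1 : 1 ≤ b) :
    ∀ j : ℕ, 0 ≤ ((1 + X) * (Pa a b - X^2)).coeff j := by
  have e1 : C (a+b) = C a + C b := by rw [C_add]
  have e2 : C (b-1) = C b - 1 := by rw [C_sub, C_1]
  have e3 : C (a-1) = C a - 1 := by rw [C_sub, C_1]
  have e4 : C (2*a) = C 2 * C a := by rw [C_mul]
  have e5 : (C (2:ℤ) : ℤ[X]) = 2 := by norm_num
  have hq : (1+X) * (Pa a b - X^2)
      = C a * X^0 + C (a+b) * X^1 + C (b-1) * X^2 + C (a-1) * X^3 + C (2*a) * X^4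
        + C a * X^5 := by
    rw [e1, e2, e3, e4, e5]
    unfold Pa; ring
  intro j
  rw [hq]
  simp only [coeff_add]
  have t0 := termco a (by linarith) 0 j
  have t1 := termco (a+b) (by linarith) 1 j
  have t2 := termco (b-1) (by linarith) 2 j
  have t3 := termco (a-1) (by linarith) 3 j
  have t4 := termco (2*a) (by linarith) 4 j
  have t5 := termco a (by linarith) 5 j
  linarith

end NegAux
open NegAux in
theorem every_negativity_is_attained (n : ℕ) (hn : 2 ≤ n) :
    let a₁ : ℤ := 5 ^ n
    let a₀ : ℤ := ((n : ℤ) - 1) * 5 ^ (2 * n) / 2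
    let p : Polynomial ℤ :=
      C a₀ + C a₁ * X - X ^ 2 + C a₀ * X ^ 3 + C a₀ * X ^ 4
    (∀ k : ℕ, 1 ≤ k → k < n → ∃ j, (p ^ k).coeff j < 0) ∧
      (∀ j, 0 ≤ (p ^ n).coeff j) ∧
      (∀ j, 0 ≤ ((1 + X) * p).coeff j) := by
  intro a₁ a₀ p
  have hb_def : a₁ = 5 ^ n := rfl
  have ha_def : a₀ = ((n : ℤ) - 1) * 5 ^ (2 * n) / 2 := rfl
  have hp : p = Pa a₀ a₁ - X^2 := by
    show C a₀ + C a₁ * X - X ^ 2 + C a₀ * X ^ 3 + C a₀ * X ^ 4 = Pa a₀ a₁ - X^2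
    unfold Pa; ring
  -- numeric facts
  have hb0 : (0:ℤ) ≤ a₁ := by rw [hb_def]; positivity
  have hb25 : (25:ℤ) ≤ a₁ := by
    rw [hb_def]
    calc (25:ℤ) = 5^2 := by norm_num
    _ ≤ 5^n := pow_le_pow_right₀ (by norm_num) hn
  have hnb : (n:ℤ) ≤ a₁ := by
    rw [hb_def]
    have h1 : n < 5^n := Nat.lt_pow_self (by norm_num)
    have h2 : ((n:ℕ):ℤ) < ((5^n : ℕ) : ℤ) := by exact_mod_cast h1
    push_cast at h2
    linarith
  have hsq : (5:ℤ)^(2*n) = a₁^2 := by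
    rw [hb_def, show 2*n = n*2 by ring, pow_mul]
  have hX0 : (0:ℤ) ≤ ((n:ℤ) - 1) * a₁^2 := by
    have : (2:ℤ) ≤ (n:ℤ) := by exact_mod_cast hn
    have : (0:ℤ) ≤ (n:ℤ) - 1 := by linarith
    positivity
  have hdiv : 2 * a₀ ≤ ((n:ℤ)-1) * a₁^2 ∧ ((n:ℤ)-1) * a₁^2 - 1 ≤ 2 * a₀ := by
    have heq : a₀ = (((n:ℤ)-1) * a₁^2) / 2 := by rw [ha_def, hsq]
    have hmod := Int.emod_nonneg (((n:ℤ)-1) * a₁^2) (show (2:ℤ) ≠ 0 by norm_num)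
    have hmod2 := Int.emod_lt_of_pos (((n:ℤ)-1) * a₁^2) (show (0:ℤ) < 2 by norm_num)
    have hdm := Int.mul_ediv_add_emod (((n:ℤ)-1) * a₁^2) 2
    constructor <;> [skip; skip] <;> rw [heq] <;> omega
  obtain ⟨hub, hlb⟩ := hdiv
  have hn2 : (2:ℤ) ≤ (n:ℤ) := by exact_mod_cast hn
  have hb2sq : (625:ℤ) ≤ a₁^2 := by nlinarith
  have ha312 : (312:ℤ) ≤ a₀ := by
    have h1 : a₁^2 ≤ ((n:ℤ)-1) * a₁^2 := by nlinarith
    linarith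
  have ha0 : (0:ℤ) ≤ a₀ := by linarith
  have ha3 : (3:ℤ) ≤ a₀ := by linarith
  have han : (n:ℤ) ≤ a₀ := by
    have : (n:ℤ) ≤ a₁ := hnb
    nlinarith
  have hba : a₁^3 ≤ a₀^2 := by
    have h1 : a₁^2 - 1 ≤ 2*a₀ := by nlinarith
    have h2 : (0:ℤ) ≤ a₁^2 - 1 := by nlinarith
    have h3 : (a₁^2 - 1)^2 ≤ (2*a₀)^2 := by nlinarith
    nlinarith [h3, hb25, sq_nonneg a₁, pow_nonneg hb0 3, pow_nonneg hb0 4]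
  refine ⟨?_, ?_, ?_⟩
  · intro k hk1 hklt
    refine ⟨2, ?_⟩
    rw [hp]
    exact part1 ha0 hb0 (by linarith) (by linarith) hlb k hk1 hklt
  · intro j
    rw [hp]
    exact part2 ha0 hb0 hnb han hba hub hn ha3 (by linarith) j
  · intro j
    rw [hp]
    exact part3 (by linarith) (by linarith) j
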